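/- Let θ > 0, γ > 0 satisfy (1+γ)θ < 1, and let C, D > 0. Then there is no continuous nonnegative function h : [0, ∞) → ℝ satisfying h(t) ≥ C + D ∫₀ᵗ h(s)^{1+γ} (t−s)^{−θ} ds for all t > 0. (Equivalently, for any C > 0 every nonnegative solution of this renewal inequality blows up in finite time.) -/

import Mathlib

open MeasureTheory Set

/-- Proposition 2.8 of the paper.
Let `θ > 0`, `γ > 0` satisfy `(1+γ)θ < 1`, and let `C, D > 0`.  Then there is no
continuous nonnegative function `h : [0, ∞) → ℝ` satisfying the renewal inequality
`h t ≥ C + D ∫₀ᵗ h(s)^(1+γ) (t-s)^(-θ) ds` for all `t > 0`, where the integral is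
the Lebesgue integral of the nonnegative integrand over `(0, t)`. -/
theorem no_global_solution_renewal_inequality
    (θ γ C D : ℝ) (hθ : 0 < θ) (hγ : 0 < γ) (hsub : (1 + γ) * θ < 1)
    (hC : 0 < C) (hD : 0 < D) :
    ¬ ∃ h : ℝ → ℝ,
      ContinuousOn h (Set.Ici 0) ∧
      (∀ t ∈ Set.Ici (0 : ℝ), 0 ≤ h t) ∧
      (∀ t : ℝ, 0 < t →
        ENNReal.ofReal C
          + ENNReal.ofReal D *
            ∫⁻ s in Set.Ioo 0 t, ENNReal.ofReal (h s ^ (1 + γ) * (t - s) ^ (-θ))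
          ≤ ENNReal.ofReal (h t)) := by
  rintro ⟨h, -, hnn, hineq⟩
  have hθ1 : θ < 1 := by nlinarith
  have h1θ : (0:ℝ) < 1 - θ := by linarith
  set p : ℝ := 1 / (1 - θ) with hp
  have hp0 : 0 < p := by positivity
  have hCγ : (0:ℝ) < C ^ γ := Real.rpow_pos_of_pos hC γ
  set Q : ℝ := 2 / (D * C ^ γ) with hQ
  have hQ0 : 0 < Q := by positivity
  set R : ℝ := (2:ℝ) ^ (-γ) with hR
  have hR0 : 0 < R := Real.rpow_pos_of_pos two_pos _
  have hR1 : R < 1 := Real.rpow_lt_one_of_one_lt_of_neg one_lt_two (by linarith)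
  -- levels and step lengths
  set m : ℕ → ℝ := fun k => C * 2 ^ k with hm
  set δ : ℕ → ℝ := fun k => (Q * R ^ k) ^ p with hδ
  have hm0 : ∀ k, 0 < m k := fun k => by simp only [hm]; positivity
  have hδ0 : ∀ k, 0 < δ k := fun k =>
    Real.rpow_pos_of_pos (by positivity) _
  -- the key algebraic identity behind the choice of step lengths
  have hkey : ∀ k : ℕ, D * (m k) ^ (1 + γ) * (δ k) ^ (1 - θ) = 2 * m k := by
    intro k
    have hRk : R ^ k = (2:ℝ) ^ (-(γ * (k:ℝ))) := by
      rw [hR, ← Real.rpow_natCast ((2:ℝ) ^ (-γ)) k, ← Real.rpow_mul (by norm_num)]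
      ring_nf
    have hbase : (0:ℝ) < Q * R ^ k := by positivity
    have h1 : (δ k) ^ (1 - θ) = Q * R ^ k := by
      rw [hδ, ← Real.rpow_mul hbase.le, one_div_mul_cancel (by linarith : (1:ℝ) - θ ≠ 0),
        Real.rpow_one]
    rw [h1, hRk, hm, hQ]
    show D * (C * 2 ^ k) ^ (1 + γ) * (2 / (D * C ^ γ) * (2:ℝ) ^ (-(γ * (k:ℝ)))) = 2 * (C * 2 ^ k)
    rw [Real.mul_rpow hC.le (by positivity),
      ← Real.rpow_natCast (2:ℝ) k, ← Real.rpow_mul (by norm_num)]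
    have hC1γ : C ^ (1 + γ) = C * C ^ γ := by
      rw [Real.rpow_add hC, Real.rpow_one]
    rw [hC1γ]
    have h2 : (2:ℝ) ^ ((k:ℝ) * (1 + γ)) * (2:ℝ) ^ (-(γ * (k:ℝ))) = 2 ^ k := by
      rw [← Real.rpow_add two_pos, ← Real.rpow_natCast (2:ℝ) k]; ring_nf
    field_simp
    rw [mul_comm γ (k:ℝ), ← Real.rpow_natCast] at h2
    linear_combination h2
  -- partial sums of the step lengths
  set T : ℕ → ℝ := fun k => ∑ j ∈ Finset.range k, δ j with hT
  have hT0 : ∀ k, 0 ≤ T k := fun k =>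
    Finset.sum_nonneg fun j _ => (hδ0 j).le
  -- the partial sums are uniformly bounded
  set ρ : ℝ := R ^ p with hρ
  have hρ0 : 0 < ρ := Real.rpow_pos_of_pos hR0 _
  have hρ1 : ρ < 1 := Real.rpow_lt_one hR0.le hR1 hp0
  have hδgeom : ∀ j : ℕ, δ j = Q ^ p * ρ ^ j := by
    intro j
    show (Q * R ^ j) ^ p = Q ^ p * ρ ^ j
    rw [Real.mul_rpow hQ0.le (by positivity), hρ]
    congr 1
    rw [← Real.rpow_natCast R j, ← Real.rpow_mul hR0.le, mul_comm (j:ℝ) p,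
      Real.rpow_mul hR0.le, Real.rpow_natCast]
  have hTbound : ∀ k, T k ≤ Q ^ p * (1 / (1 - ρ)) := by
    intro k
    have hsum : ∑ j ∈ Finset.range k, ρ ^ j ≤ 1 / (1 - ρ) := by
      rw [geom_sum_eq (ne_of_lt hρ1) k]
      have hfrac : (ρ ^ k - 1) / (ρ - 1) = (1 - ρ ^ k) / (1 - ρ) := by
        rw [← neg_div_neg_eq]; ring_nf
      rw [hfrac, div_le_div_iff₀ (by linarith) (by linarith)]
      nlinarith [pow_pos hρ0 k]
    calc T k = Q ^ p * ∑ j ∈ Finset.range k, ρ ^ j := by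
          show ∑ j ∈ Finset.range k, δ j = _
          rw [Finset.mul_sum]; exact Finset.sum_congr rfl fun j _ => hδgeom j
      _ ≤ Q ^ p * (1 / (1 - ρ)) := by
          apply mul_le_mul_of_nonneg_left hsum (Real.rpow_pos_of_pos hQ0 p).le
  -- the main bootstrap
  have key : ∀ k : ℕ, ∀ t : ℝ, T k < t → m k ≤ h t := by
    intro k
    induction k with
    | zero =>
      intro t ht
      have ht0 : 0 < t := by simpa [hT] using ht
      have := hineq t ht0
      have hle : ENNReal.ofReal C ≤ ENNReal.ofReal (h t) := le_trans le_self_add this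
      have := (ENNReal.ofReal_le_ofReal_iff (hnn t ht0.le)).mp hle
      simpa [hm] using this
    | succ k IH =>
      intro t ht
      have hTsucc : T (k + 1) = T k + δ k := Finset.sum_range_succ _ _
      rw [hTsucc] at ht
      have ht0 : 0 < t := lt_of_le_of_lt (by linarith [hT0 k, hδ0 k]) ht
      have htδ : T k < t - δ k := by linarith
      have htδ0 : 0 < t - δ k := lt_of_le_of_lt (hT0 k) htδ
      -- lower bound for the integral
      have hsubset : Ioo (t - δ k) t ⊆ Ioo 0 t := fun s hs =>
        ⟨lt_trans htδ0 hs.1, hs.2⟩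
      have hconst : ENNReal.ofReal ((m k) ^ (1 + γ) * (δ k) ^ (-θ)) * volume (Ioo (t - δ k) t)
          ≤ ∫⁻ s in Ioo 0 t, ENNReal.ofReal (h s ^ (1 + γ) * (t - s) ^ (-θ)) := by
        rw [← setLIntegral_const (Ioo (t - δ k) t) _]
        refine le_trans (setLIntegral_mono' measurableSet_Ioo ?_)
          (lintegral_mono_set hsubset)
        intro s hs
        apply ENNReal.ofReal_le_ofReal
        have hs1 : m k ≤ h s := IH s (lt_trans htδ hs.1)
        have hts : 0 < t - s := by linarith [hs.2]
        have hts2 : t - s ≤ δ k := by linarith [hs.1]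
        have hb1 : (m k) ^ (1 + γ) ≤ h s ^ (1 + γ) :=
          Real.rpow_le_rpow (hm0 k).le hs1 (by linarith)
        have hb2 : (δ k) ^ (-θ) ≤ (t - s) ^ (-θ) :=
          Real.rpow_le_rpow_of_nonpos hts hts2 (by linarith)
        exact mul_le_mul hb1 hb2 (Real.rpow_nonneg (hδ0 k).le _)
          (Real.rpow_nonneg (le_trans (hm0 k).le hs1) _)
      have hvol : volume (Ioo (t - δ k) t) = ENNReal.ofReal (δ k) := by
        rw [Real.volume_Ioo]; congr 1; ring
      rw [hvol, ← ENNReal.ofReal_mul (by positivity)] at hconst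
      -- combine
      have hmain := hineq t ht0
      have hchain : ENNReal.ofReal (2 * m k) ≤ ENNReal.ofReal (h t) := by
        calc ENNReal.ofReal (2 * m k)
            = ENNReal.ofReal (D * ((m k) ^ (1 + γ) * (δ k) ^ (-θ) * δ k)) := by
              congr 1
              have hexp : (δ k) ^ (-θ) * δ k = (δ k) ^ (1 - θ) := by
                nth_rw 2 [← Real.rpow_one (δ k)]
                rw [← Real.rpow_add (hδ0 k)]
                ring_nf
              rw [mul_assoc (m k ^ (1 + γ)), hexp, ← hkey k]
              ring
          _ = ENNReal.ofReal D * ENNReal.ofReal ((m k) ^ (1 + γ) * (δ k) ^ (-θ) * δ k) := by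
              rw [ENNReal.ofReal_mul hD.le]
          _ ≤ ENNReal.ofReal D *
              ∫⁻ s in Ioo 0 t, ENNReal.ofReal (h s ^ (1 + γ) * (t - s) ^ (-θ)) := by
              exact mul_le_mul_right hconst _
          _ ≤ ENNReal.ofReal C + ENNReal.ofReal D *
              ∫⁻ s in Ioo 0 t, ENNReal.ofReal (h s ^ (1 + γ) * (t - s) ^ (-θ)) :=
              le_add_self
          _ ≤ ENNReal.ofReal (h t) := hmain
      have := (ENNReal.ofReal_le_ofReal_iff (hnn t ht0.le)).mp hchain
      have hmsucc : m (k + 1) = 2 * m k := by show C * 2 ^ (k+1) = 2 * (C * 2 ^ k); ring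
      linarith [this, hmsucc.le]
  -- conclusion: evaluate at a fixed time beyond all the `T k`
  set t0 : ℝ := Q ^ p * (1 / (1 - ρ)) + 1 with ht0def
  have hkt0 : ∀ k, T k < t0 := fun k => lt_of_le_of_lt (hTbound k) (by linarith)
  obtain ⟨k, hk⟩ := pow_unbounded_of_one_lt (h t0 / C) (one_lt_two (α := ℝ))
  have hlt : h t0 < C * 2 ^ k := by
    rw [div_lt_iff₀ hC] at hk; linarith
  have hfin : C * 2 ^ k ≤ h t0 := key k t0 (hkt0 k)
  linarith
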